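/- arXiv:1601.03712 — 2 statements merged into one kernel-verified Lean document; each statement's English description precedes it below -/
import Mathlib

section
/- For any two positive semidefinite Hermitian matrices A and B of the same size, ‖A − B‖ ≤ max{‖A‖, ‖B‖}, where ‖·‖ is the operator norm. -/
open scoped ComplexOrder
/-- Operator (spectral) norm of a complex matrix. -/
noncomputable def opNorm {n : Type*} [Fintype n] [DecidableEq n]
    (A : Matrix n n ℂ) : ℝ :=
  ‖LinearMap.toContinuousLinearMap (Matrix.toEuclideanLin A)‖

lemma opNorm_eq_toEuclideanCLM {n : Type*} [Fintype n] [DecidableEq n]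
    (A : Matrix n n ℂ) : opNorm A = ‖Matrix.toEuclideanCLM (𝕜 := ℂ) A‖ := by
  congr 1

lemma toEuclideanCLM_nonneg {n : Type*} [Fintype n] [DecidableEq n]
    {A : Matrix n n ℂ} (hA : A.PosSemidef) :
    0 ≤ Matrix.toEuclideanCLM (𝕜 := ℂ) A := by
  open MatrixOrder Matrix.Norms.L2Operator in
  obtain ⟨B, rfl⟩ := CStarAlgebra.nonneg_iff_eq_star_mul_self.mp hA.nonneg
  simp only [← Matrix.star_eq_conjTranspose, map_mul, map_star]
  exact star_mul_self_nonneg _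

lemma algebraMap_nonneg_clm {n : ℕ} {t : ℝ} (ht : 0 ≤ t) :
    (0 : EuclideanSpace ℂ (Fin n) →L[ℂ] EuclideanSpace ℂ (Fin n)) ≤ algebraMap ℝ _ t := by
  set 𝒜 := EuclideanSpace ℂ (Fin n) →L[ℂ] EuclideanSpace ℂ (Fin n)
  have h1 : algebraMap ℝ 𝒜 t =
      star (algebraMap ℝ 𝒜 (Real.sqrt t)) * algebraMap ℝ 𝒜 (Real.sqrt t) := by
    have hst : star (algebraMap ℝ 𝒜 (Real.sqrt t)) = algebraMap ℝ 𝒜 (Real.sqrt t) := by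
      rw [IsScalarTower.algebraMap_apply ℝ ℂ 𝒜, ← algebraMap_star_comm]
      norm_num
    rw [hst, ← map_mul, Real.mul_self_sqrt ht]
  rw [h1]
  exact star_mul_self_nonneg _

set_option maxHeartbeats 1000000 in
set_option synthInstance.maxHeartbeats 400000 in
/-- For positive semidefinite Hermitian matrices `A` and `B`,
`‖A − B‖ ≤ max (‖A‖, ‖B‖)` in operator norm. -/
theorem opNorm_sub_le_max_of_posSemidef {n : ℕ}
    {A B : Matrix (Fin n) (Fin n) ℂ}
    (hA : A.PosSemidef) (hB : B.PosSemidef) :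
    opNorm (A - B) ≤ max (opNorm A) (opNorm B) := by
  set a := Matrix.toEuclideanCLM (𝕜 := ℂ) A with ha_def
  set b := Matrix.toEuclideanCLM (𝕜 := ℂ) B with hb_def
  have ha : 0 ≤ a := toEuclideanCLM_nonneg hA
  have hb : 0 ≤ b := toEuclideanCLM_nonneg hB
  rw [opNorm_eq_toEuclideanCLM, opNorm_eq_toEuclideanCLM, opNorm_eq_toEuclideanCLM, map_sub]
  set M : ℝ := max ‖a‖ ‖b‖ with hM_def
  have hM : (0:ℝ) ≤ M := le_trans (norm_nonneg a) (le_max_left _ _)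
  have hsa : IsSelfAdjoint a := IsSelfAdjoint.of_nonneg ha
  have hsb : IsSelfAdjoint b := IsSelfAdjoint.of_nonneg hb
  have hx : IsSelfAdjoint (a - b) :=
    IsSelfAdjoint.sub (R := EuclideanSpace ℂ (Fin n) →L[ℂ] EuclideanSpace ℂ (Fin n)) hsa hsb
  have hmono : ∀ r s : ℝ, r ≤ s →
      algebraMap ℝ (EuclideanSpace ℂ (Fin n) →L[ℂ] EuclideanSpace ℂ (Fin n)) r ≤
        algebraMap ℝ _ s := by
    intro r s hrs
    rw [← sub_nonneg, ← map_sub]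
    exact algebraMap_nonneg_clm (n := n) (by linarith)
  have h1 : a - b ≤ algebraMap ℝ _ M :=
    calc a - b ≤ a := sub_le_self a hb
      _ ≤ algebraMap ℝ _ ‖a‖ := hsa.le_algebraMap_norm_self
      _ ≤ algebraMap ℝ _ M := hmono _ _ (le_max_left _ _)
  have h2 : algebraMap ℝ _ (-M) ≤ a - b := by
    calc algebraMap ℝ _ (-M) ≤ algebraMap ℝ _ (-‖b‖) :=
        hmono _ _ (by simp [hM_def])
      _ = -(algebraMap ℝ _ ‖b‖) := by rw [map_neg]
      _ ≤ -b := neg_le_neg hsb.le_algebraMap_norm_self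
      _ ≤ a - b := by simpa using sub_le_sub_right ha b
  rcases subsingleton_or_nontrivial
      (EuclideanSpace ℂ (Fin n) →L[ℂ] EuclideanSpace ℂ (Fin n)) with h | h
  · simpa [Subsingleton.elim (Matrix.toEuclideanCLM (𝕜 := ℂ) A - Matrix.toEuclideanCLM (𝕜 := ℂ) B) 0] using hM
  · have hsp1 : ∀ r ∈ spectrum ℝ (a - b), r ≤ M :=
      (le_algebraMap_iff_spectrum_le (ha := hx)).mp h1
    have hsp2 : ∀ r ∈ spectrum ℝ (a - b), -M ≤ r :=
      (algebraMap_le_iff_le_spectrum (ha := hx)).mp h2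
    rcases CStarAlgebra.norm_or_neg_norm_mem_spectrum hx with hmem | hmem
    · exact hsp1 _ hmem
    · have := hsp2 _ hmem
      linarith
end

section
/- For M ≥ 2, the second derivative at 0 of the squared Fejér kernel K_M(τ) = [sin(πMτ)/(M sin(πτ))]⁴ equals −4π²(M²−1)/3. -/
open Real

noncomputable def fejC (M k : ℕ) : ℝ := ((2*(k:ℝ)+1) - M) * π

noncomputable def fejS (M : ℕ) (τ : ℝ) : ℝ :=
  ∑ k ∈ Finset.range M, Real.cos (fejC M k * τ)

noncomputable def fejS1 (M : ℕ) (τ : ℝ) : ℝ :=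
  ∑ k ∈ Finset.range M, -fejC M k * Real.sin (fejC M k * τ)

lemma sin_mul_sum_cos (M : ℕ) (x : ℝ) :
    Real.sin x * ∑ k ∈ Finset.range M, Real.cos (((2*(k:ℝ)+1) - M) * x)
      = Real.sin (M * x) := by
  have key : ∀ k ∈ Finset.range M,
      Real.sin x * Real.cos (((2*(k:ℝ)+1) - M) * x)
        = (Real.sin ((2*(((k+1:ℕ)):ℝ) - M) * x) - Real.sin ((2*(k:ℝ) - M) * x)) / 2 := by
    intro k _
    rw [Real.sin_sub_sin]
    have h1 : ((2*(((k+1:ℕ)):ℝ) - M) * x - (2*(k:ℝ) - M) * x) / 2 = x := by push_cast; ring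
    have h2 : ((2*(((k+1:ℕ)):ℝ) - M) * x + (2*(k:ℝ) - M) * x) / 2
        = ((2*(k:ℝ)+1) - M) * x := by push_cast; ring
    rw [h1, h2]; ring
  rw [Finset.mul_sum, Finset.sum_congr rfl key, ← Finset.sum_div,
    Finset.sum_range_sub (fun k => Real.sin ((2*(k:ℝ) - M) * x))]
  have h3 : (2*((0:ℕ):ℝ) - M) * x = -((M:ℝ) * x) := by push_cast; ring
  rw [h3, Real.sin_neg]
  ring

lemma gauss_sum (M : ℕ) : ∑ k ∈ Finset.range M, (k:ℝ) = (M:ℝ)*((M:ℝ)-1)/2 := by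
  induction M with
  | zero => simp
  | succ n ih => rw [Finset.sum_range_succ, ih]; push_cast; ring

lemma sq_gauss_sum (M : ℕ) :
    ∑ k ∈ Finset.range M, (k:ℝ)^2 = (M:ℝ)*((M:ℝ)-1)*(2*(M:ℝ)-1)/6 := by
  induction M with
  | zero => simp
  | succ n ih => rw [Finset.sum_range_succ, ih]; push_cast; ring

lemma sq_sum (M : ℕ) :
    ∑ k ∈ Finset.range M, ((2*(k:ℝ)+1) - M)^2 = (M:ℝ)*((M:ℝ)^2-1)/3 := by
  have expand : ∀ k ∈ Finset.range M, ((2*(k:ℝ)+1) - M)^2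
      = 4*(k:ℝ)^2 + (4-4*(M:ℝ))*(k:ℝ) + (1-(M:ℝ))^2 := fun k _ => by ring
  rw [Finset.sum_congr rfl expand, Finset.sum_add_distrib, Finset.sum_add_distrib,
    ← Finset.mul_sum, ← Finset.mul_sum, Finset.sum_const, Finset.card_range,
    nsmul_eq_mul, gauss_sum, sq_gauss_sum]
  ring

/-- The squared Fejér kernel `K_M(τ) = (sin(πMτ)/(M sin(πτ)))⁴`, extended continuously
(by the value 1) at points where `sin(πτ) = 0`. -/
noncomputable def squaredFejer (M : ℕ) (τ : ℝ) : ℝ :=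
  if Real.sin (π * τ) = 0 then 1
  else (Real.sin (π * M * τ) / (M * Real.sin (π * τ))) ^ 4

lemma squaredFejer_eq (M : ℕ) (hM0 : (M:ℝ) ≠ 0) :
    squaredFejer M = fun τ => (fejS M τ / M)^4 := by
  funext τ
  unfold squaredFejer
  by_cases h : Real.sin (π*τ) = 0
  · rw [if_pos h]
    obtain ⟨n, hn⟩ := Real.sin_eq_zero_iff.mp h
    have hτ : τ = (n:ℝ) := by
      have hπ : π ≠ 0 := Real.pi_ne_zero
      have : π * τ = π * (n:ℝ) := by linarith [hn, mul_comm (n:ℝ) π]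
      exact mul_left_cancel₀ hπ this
    subst hτ
    have hterm : ∀ k ∈ Finset.range M, Real.cos (fejC M k * (n:ℝ))
        = Real.cos ((((1 - (M:ℤ))*n : ℤ) : ℝ) * π) := by
      intro k _
      have harg : fejC M k * (n:ℝ)
          = (((1 - (M:ℤ))*n : ℤ) : ℝ) * π + (((k:ℤ)*n : ℤ) : ℝ) * (2*π) := by
        unfold fejC; push_cast; ring
      rw [harg, Real.cos_add_int_mul_two_pi]
    have hSn : fejS M (n:ℝ) = M * Real.cos ((((1 - (M:ℤ))*n : ℤ) : ℝ) * π) := by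
      unfold fejS
      rw [Finset.sum_congr rfl hterm, Finset.sum_const, Finset.card_range, nsmul_eq_mul]
    symm
    rw [hSn, mul_div_cancel_left₀ _ hM0]
    have hsq : Real.cos ((((1 - (M:ℤ))*n : ℤ) : ℝ) * π) ^ 2 = 1 := by
      rw [Real.cos_sq', Real.sin_int_mul_pi]; ring
    calc Real.cos ((((1 - (M:ℤ))*n : ℤ) : ℝ) * π) ^ 4
        = (Real.cos ((((1 - (M:ℤ))*n : ℤ) : ℝ) * π) ^ 2)^2 := by ring
      _ = 1 := by rw [hsq]; norm_num
  · rw [if_neg h]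
    have hid : Real.sin (π*(M:ℝ)*τ) = Real.sin (π*τ) * fejS M τ := by
      have h0 := _root_.sin_mul_sum_cos M (π*τ)
      have e1 : ∀ k ∈ Finset.range M,
          Real.cos (((2*(k:ℝ)+1) - M) * (π*τ)) = Real.cos (fejC M k * τ) := by
        intro k _; unfold fejC; ring_nf
      rw [Finset.sum_congr rfl e1] at h0
      rw [show π*(M:ℝ)*τ = (M:ℝ)*(π*τ) by ring, ← h0]
      rfl
    rw [hid, mul_comm (M:ℝ) (Real.sin (π*τ)), mul_div_mul_left _ _ h]

lemma hasDerivAt_fejS (M : ℕ) (τ : ℝ) : HasDerivAt (fejS M) (fejS1 M τ) τ := by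
  unfold fejS fejS1
  apply HasDerivAt.fun_sum
  intro k _
  have := (Real.hasDerivAt_cos (fejC M k * τ)).comp τ ((hasDerivAt_id τ).const_mul (fejC M k))
  refine this.congr_deriv ?_
  ring

lemma hasDerivAt_fejS1 (M : ℕ) (τ : ℝ) :
    HasDerivAt (fejS1 M) (∑ k ∈ Finset.range M, -(fejC M k)^2 * Real.cos (fejC M k * τ)) τ := by
  unfold fejS1
  apply HasDerivAt.fun_sum
  intro k _
  have := ((Real.hasDerivAt_sin (fejC M k * τ)).comp τ
    ((hasDerivAt_id τ).const_mul (fejC M k))).const_mul (-fejC M k)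
  refine this.congr_deriv ?_
  ring

/-- For `M ≥ 2`, the second derivative at `0` of the squared Fejér kernel is
`−4π²(M²−1)/3`. -/
theorem squaredFejer_second_deriv_at_zero (M : ℕ) (hM : 2 ≤ M) :
    iteratedDeriv 2 (squaredFejer M) 0 = -(4 * π ^ 2 * ((M : ℝ) ^ 2 - 1) / 3) := by
  have hM0 : (M:ℝ) ≠ 0 := Nat.cast_ne_zero.mpr (by omega)
  rw [squaredFejer_eq M hM0]
  have hf : ∀ τ : ℝ, HasDerivAt (fun τ => (fejS M τ / M)^4)
      (4 * (fejS M τ / M)^3 * (fejS1 M τ / M)) τ := by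
    intro τ
    have h := ((hasDerivAt_fejS M τ).div_const (M:ℝ)).fun_pow 4
    refine h.congr_deriv ?_
    norm_num
  have hderiv1 : deriv (fun τ => (fejS M τ / M)^4)
      = fun τ => 4 * (fejS M τ / M)^3 * (fejS1 M τ / M) :=
    funext fun τ => (hf τ).deriv
  rw [iteratedDeriv_succ, iteratedDeriv_one, hderiv1]
  have h3 : HasDerivAt (fun τ => 4 * (fejS M τ / M)^3)
      (4 * ((3:ℕ) * (fejS M 0 / M)^2 * (fejS1 M 0 / M))) 0 :=
    (((hasDerivAt_fejS M 0).div_const (M:ℝ)).pow 3).const_mul (4:ℝ)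
  have hg := h3.fun_mul ((hasDerivAt_fejS1 M 0).div_const (M:ℝ))
  rw [hg.deriv]
  have hS0 : fejS M 0 = M := by simp [fejS]
  have hS10 : fejS1 M 0 = 0 := by simp [fejS1]
  have hS20 : (∑ k ∈ Finset.range M, -(fejC M k)^2 * Real.cos (fejC M k * 0))
      = -(π^2 * ((M:ℝ)*((M:ℝ)^2-1)/3)) := by
    have e : ∀ k ∈ Finset.range M, -(fejC M k)^2 * Real.cos (fejC M k * 0)
        = -(π^2) * ((2*(k:ℝ)+1) - M)^2 := by
      intro k _; unfold fejC; simp; ring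
    rw [Finset.sum_congr rfl e, ← Finset.mul_sum, sq_sum]
    ring
  rw [hS0, hS10, hS20]
  field_simp
  ring
end
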